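/- arXiv:1803.05853 — 2 statements merged into one kernel-verified Lean document; each statement's English description precedes it below -/
import Mathlib

section
/- Let B be a real symmetric 3×3 matrix whose smallest eigenvalue λ₁ has a one-dimensional eigenspace, spanned by a unit vector v. Let x₁,…,x_K ∈ ℝ³ with weights w_i > 0, set W = Σᵢ wᵢ, and suppose B equals the landmark matrix B = (1/K)(Σᵢ wᵢ xᵢ xᵢᵀ − (1/W)(Σᵢ wᵢ xᵢ)(Σᵢ wᵢ xᵢ)ᵀ) + (γ/N) Σⱼ pⱼ (‖yⱼ‖² I − yⱼ yⱼᵀ)/‖yⱼ‖² for nonzero vectors y₁,…,y_N ∈ ℝ³, weights pⱼ > 0 and γ > 0. Then the quadratic plane-fitting objective F(n,d) = (1/K) Σᵢ wᵢ (⟪xᵢ,n⟫ + d)² + (γ/N) Σⱼ pⱼ ‖yⱼ × n‖²/‖yⱼ‖², minimized over pairs (n,d) with ‖n‖ = 1 and d ∈ ℝ, has exactly two minimizers: (v, d*(v)) and (−v, −d*(v)), where d*(n) = −(Σᵢ wᵢ ⟪xᵢ,n⟫)/W. In particular the optimal midsagittal plane is unique up to the sign of its normal vector. -/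
open RealInnerProductSpace Matrix

/-- The cross product on `ℝ³` (with the Euclidean norm). -/
noncomputable def cross3 (a b : EuclideanSpace ℝ (Fin 3)) : EuclideanSpace ℝ (Fin 3) :=
  WithLp.toLp 2 (crossProduct a b)

/-- The quadratic (small-angle) plane-fitting objective
`F(n,d) = (1/K) ∑ i, w i (⟪x i, n⟫ + d)² + (γ/N) ∑ j, p j ‖y j × n‖²/‖y j‖²`. -/
noncomputable def quadObjective (K N : ℕ) (x : Fin K → EuclideanSpace ℝ (Fin 3))
    (w : Fin K → ℝ) (y : Fin N → EuclideanSpace ℝ (Fin 3)) (p : Fin N → ℝ) (γ : ℝ)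
    (n : EuclideanSpace ℝ (Fin 3)) (d : ℝ) : ℝ :=
  (1 / (K : ℝ)) * ∑ i, w i * (⟪x i, n⟫ + d) ^ 2 +
    (γ / (N : ℝ)) * ∑ j, p j * ‖cross3 (y j) n‖ ^ 2 / ‖y j‖ ^ 2

/-- The optimal offset `d*(n) = -(∑ i, w i ⟪x i, n⟫)/W`. -/
noncomputable def optOffset (K : ℕ) (x : Fin K → EuclideanSpace ℝ (Fin 3))
    (w : Fin K → ℝ) (W : ℝ) (n : EuclideanSpace ℝ (Fin 3)) : ℝ :=
  -(∑ i, w i * ⟪x i, n⟫) / W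

lemma inner_eq_dot (a b : EuclideanSpace ℝ (Fin 3)) : ⟪a, b⟫ = a ⬝ᵥ b := by
  simp [PiLp.inner_apply, RCLike.inner_apply, dotProduct, mul_comm]

lemma norm_sq_eq_dot (a : EuclideanSpace ℝ (Fin 3)) : ‖a‖ ^ 2 = a ⬝ᵥ a := by
  rw [← real_inner_self_eq_norm_sq, inner_eq_dot]

lemma cross_norm_sq (a b : EuclideanSpace ℝ (Fin 3)) :
    ‖cross3 a b‖ ^ 2 = ‖a‖ ^ 2 * (b ⬝ᵥ b) - (a ⬝ᵥ b) ^ 2 := by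
  rw [norm_sq_eq_dot, norm_sq_eq_dot]
  show (crossProduct a b) ⬝ᵥ (crossProduct a b) = _
  rw [cross_dot_cross, dotProduct_comm b a]
  ring

lemma dot_vecMulVec_mulVec (a b n : Fin 3 → ℝ) :
    n ⬝ᵥ (vecMulVec a b *ᵥ n) = (a ⬝ᵥ n) * (b ⬝ᵥ n) := by
  simp only [dotProduct, Matrix.mulVec, Matrix.vecMulVec_apply, Finset.sum_mul, Finset.mul_sum]
  rw [Finset.sum_comm]
  exact Finset.sum_congr rfl fun i _ => Finset.sum_congr rfl fun j _ => by ring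

lemma sumM_mulVec {ι : Type*} (s : Finset ι) (f : ι → Matrix (Fin 3) (Fin 3) ℝ)
    (v : Fin 3 → ℝ) : (∑ j ∈ s, f j) *ᵥ v = ∑ j ∈ s, f j *ᵥ v := by
  ext i
  simp only [Matrix.mulVec, dotProduct, Matrix.sum_apply, Finset.sum_mul, Finset.sum_apply]
  exact Finset.sum_comm

lemma dot_sum {ι : Type*} (s : Finset ι) (v : Fin 3 → ℝ) (f : ι → Fin 3 → ℝ) :
    v ⬝ᵥ (∑ j ∈ s, f j) = ∑ j ∈ s, v ⬝ᵥ f j := by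
  simp only [dotProduct, Finset.mul_sum, Finset.sum_apply]
  exact Finset.sum_comm

lemma sumE_dot {ι : Type*} (s : Finset ι) (f : ι → EuclideanSpace ℝ (Fin 3)) (v : Fin 3 → ℝ) :
    (∑ j ∈ s, f j) ⬝ᵥ v = ∑ j ∈ s, f j ⬝ᵥ v := by
  have h : ∀ a, (∑ j ∈ s, (f j : Fin 3 → ℝ)) a = ∑ j ∈ s, f j a := fun a => Finset.sum_apply a s _
  simp only [dotProduct, h, Finset.sum_mul]
  exact Finset.sum_comm

lemma smulE_dot (c : ℝ) (a : EuclideanSpace ℝ (Fin 3)) (v : Fin 3 → ℝ) :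
    (c • a : EuclideanSpace ℝ (Fin 3)) ⬝ᵥ v = c * (a ⬝ᵥ v) :=
  smul_dotProduct c a v

lemma neg_dot_mulVec (Bm : Matrix (Fin 3) (Fin 3) ℝ) (u : Fin 3 → ℝ) :
    (-u) ⬝ᵥ (Bm *ᵥ (-u)) = u ⬝ᵥ (Bm *ᵥ u) := by
  simp [Matrix.mulVec_neg]

lemma rayleigh_bound {B : Matrix (Fin 3) (Fin 3) ℝ} (hH : B.IsHermitian) (lam : ℝ)
    (hsmallest : ∀ (μ : ℝ) (u : EuclideanSpace ℝ (Fin 3)), u ≠ 0 → B *ᵥ u = μ • u → lam ≤ μ)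
    (n : EuclideanSpace ℝ (Fin 3)) (hn : ‖n‖ = 1) :
    lam ≤ n ⬝ᵥ (B *ᵥ n) ∧ (n ⬝ᵥ (B *ᵥ n) = lam → B *ᵥ n = lam • n) := by
  set e := hH.eigenvectorBasis with he
  set μ := hH.eigenvalues with hμdef
  set c : Fin 3 → ℝ := fun k => ⟪e k, n⟫ with hc
  have hBt : Bᵀ = B := by
    rw [← Matrix.conjTranspose_eq_transpose_of_trivial]; exact hH
  have hμ : ∀ k, lam ≤ μ k := by
    intro k
    refine hsmallest (μ k) (e k) ?_ (hH.mulVec_eigenvectorBasis k)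
    simpa using e.toBasis.ne_zero k
  have h1 : ∀ k, ⟪e k, (WithLp.toLp 2 (B *ᵥ n) : EuclideanSpace ℝ (Fin 3))⟫ = μ k * c k := by
    intro k
    have h7 : B *ᵥ e k = μ k • (e k : Fin 3 → ℝ) := hH.mulVec_eigenvectorBasis k
    rw [inner_eq_dot, WithLp.ofLp_toLp, dotProduct_mulVec, ← Matrix.mulVec_transpose, hBt,
      h7, smul_dotProduct, smul_eq_mul, ← inner_eq_dot]
  have expand : ∀ u : EuclideanSpace ℝ (Fin 3), ⟪n, u⟫ = ∑ k, c k * ⟪e k, u⟫ := by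
    intro u
    conv_lhs => rw [← e.sum_repr' n]
    rw [sum_inner]
    exact Finset.sum_congr rfl fun k _ => real_inner_smul_left _ _ _
  have hQn : n ⬝ᵥ (B *ᵥ n) = ∑ k, μ k * c k ^ 2 := by
    rw [show n ⬝ᵥ (B *ᵥ n) = ⟪n, WithLp.toLp 2 (B *ᵥ n)⟫ from (inner_eq_dot n (WithLp.toLp 2 (B *ᵥ n))).symm, expand]
    refine Finset.sum_congr rfl fun k _ => ?_
    rw [h1 k]; ring
  have hnn : ∑ k, c k ^ 2 = 1 := by
    have h2 : ⟪n, n⟫ = ∑ k, c k * ⟪e k, n⟫ := expand n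
    have h3 : ⟪n, n⟫ = (1 : ℝ) := by rw [real_inner_self_eq_norm_sq, hn]; norm_num
    rw [h3] at h2
    have h4 : ∑ k, c k ^ 2 = ∑ k, c k * ⟪e k, n⟫ := by
      refine Finset.sum_congr rfl fun k _ => ?_
      simp only [hc]; ring
    rw [h4, ← h2]
  have key : n ⬝ᵥ (B *ᵥ n) - lam = ∑ k, (μ k - lam) * c k ^ 2 := by
    have h4 : ∑ k, (μ k - lam) * c k ^ 2
        = (∑ k, μ k * c k ^ 2) - lam * ∑ k, c k ^ 2 := by
      rw [Finset.mul_sum, ← Finset.sum_sub_distrib]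
      exact Finset.sum_congr rfl fun k _ => by ring
    rw [h4, hnn, hQn]; ring
  have hnonneg : ∀ k ∈ Finset.univ, 0 ≤ (μ k - lam) * c k ^ 2 := fun k _ =>
    mul_nonneg (sub_nonneg.2 (hμ k)) (sq_nonneg _)
  constructor
  · have : 0 ≤ ∑ k, (μ k - lam) * c k ^ 2 := Finset.sum_nonneg hnonneg
    linarith [key]
  · intro heq
    have hsum0 : ∑ k, (μ k - lam) * c k ^ 2 = 0 := by linarith [key]
    have hz : ∀ k, (μ k - lam) * c k ^ 2 = 0 := by
      intro k
      exact (Finset.sum_eq_zero_iff_of_nonneg hnonneg).1 hsum0 k (Finset.mem_univ k)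
    have hcoef : ∀ k, ⟪e k, (WithLp.toLp 2 (B *ᵥ n) : EuclideanSpace ℝ (Fin 3))⟫
        = ⟪e k, ((lam • n : EuclideanSpace ℝ (Fin 3)))⟫ := by
      intro k
      rw [h1, real_inner_smul_right]
      have h5 := hz k
      have h6 : (μ k - lam) * c k = 0 := by
        rcases mul_eq_zero.1 h5 with h | h
        · exact mul_eq_zero_of_left h _
        · exact mul_eq_zero_of_right _ ((pow_eq_zero_iff (two_ne_zero)).1 h)
      nlinarith [h6]
    exact congrArg WithLp.ofLp ((e.sum_repr' (WithLp.toLp 2 (B *ᵥ n) : EuclideanSpace ℝ (Fin 3))).symm.trans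
      ((Finset.sum_congr rfl fun k _ => by rw [hcoef k]).trans (e.sum_repr' (lam • n))))

lemma quadForm_eq (K N : ℕ)
    (x : Fin K → EuclideanSpace ℝ (Fin 3)) (w : Fin K → ℝ)
    (y : Fin N → EuclideanSpace ℝ (Fin 3))
    (p : Fin N → ℝ) (γ : ℝ) (W : ℝ)
    (B : Matrix (Fin 3) (Fin 3) ℝ)
    (hB : B = (1 / (K : ℝ)) • (∑ i, w i • Matrix.vecMulVec (x i) (x i)
          - (1 / W) • Matrix.vecMulVec (∑ i, w i • x i) (∑ i, w i • x i))
        + (γ / (N : ℝ)) • ∑ j, (p j / ‖y j‖ ^ 2) •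
            (‖y j‖ ^ 2 • (1 : Matrix (Fin 3) (Fin 3) ℝ) - Matrix.vecMulVec (y j) (y j)))
    (n : EuclideanSpace ℝ (Fin 3)) :
    n ⬝ᵥ (B *ᵥ n)
      = (1 / (K : ℝ)) * ((∑ i, w i * (x i ⬝ᵥ n) ^ 2)
          - (1 / W) * (∑ i, w i * (x i ⬝ᵥ n)) ^ 2)
        + (γ / (N : ℝ)) * ∑ j, (p j / ‖y j‖ ^ 2)
            * (‖y j‖ ^ 2 * (n ⬝ᵥ n) - (y j ⬝ᵥ n) ^ 2) := by
  subst hB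
  rw [Matrix.add_mulVec, dotProduct_add]
  rw [Matrix.smul_mulVec, Matrix.smul_mulVec, dotProduct_smul, dotProduct_smul]
  rw [Matrix.sub_mulVec, dotProduct_sub, Matrix.smul_mulVec, dotProduct_smul]
  rw [sumM_mulVec, dot_sum, sumM_mulVec, dot_sum]
  rw [dot_vecMulVec_mulVec]
  have h1 : ∀ i : Fin K, n ⬝ᵥ ((w i • Matrix.vecMulVec (x i) (x i)) *ᵥ n)
      = w i * (x i ⬝ᵥ n) ^ 2 := by
    intro i
    rw [Matrix.smul_mulVec, dotProduct_smul, smul_eq_mul, dot_vecMulVec_mulVec]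
    ring
  have h2 : ∀ j : Fin N, n ⬝ᵥ (((p j / ‖y j‖ ^ 2) •
        (‖y j‖ ^ 2 • (1 : Matrix (Fin 3) (Fin 3) ℝ) - Matrix.vecMulVec (y j) (y j))) *ᵥ n)
      = (p j / ‖y j‖ ^ 2) * (‖y j‖ ^ 2 * (n ⬝ᵥ n) - (y j ⬝ᵥ n) ^ 2) := by
    intro j
    rw [Matrix.smul_mulVec, dotProduct_smul, smul_eq_mul, Matrix.sub_mulVec,
      dotProduct_sub, Matrix.smul_mulVec, dotProduct_smul, Matrix.one_mulVec,
      smul_eq_mul, dot_vecMulVec_mulVec]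
    ring
  rw [Finset.sum_congr rfl fun i _ => h1 i, Finset.sum_congr rfl fun j _ => h2 j]
  rw [sumE_dot]
  have h3 : ∀ i : Fin K, (w i • x i : EuclideanSpace ℝ (Fin 3)) ⬝ᵥ n = w i * (x i ⬝ᵥ n) :=
    fun i => smulE_dot _ _ _
  rw [Finset.sum_congr rfl fun i _ => h3 i]
  simp only [smul_eq_mul]
  ring

lemma quadObjective_eq (K N : ℕ)
    (x : Fin K → EuclideanSpace ℝ (Fin 3)) (w : Fin K → ℝ)
    (y : Fin N → EuclideanSpace ℝ (Fin 3)) (hy : ∀ j, y j ≠ 0)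
    (p : Fin N → ℝ) (γ : ℝ) (W : ℝ) (hW : W = ∑ i, w i)
    (hW0 : W ≠ 0) (hK0 : (K : ℝ) ≠ 0)
    (B : Matrix (Fin 3) (Fin 3) ℝ)
    (hB : B = (1 / (K : ℝ)) • (∑ i, w i • Matrix.vecMulVec (x i) (x i)
          - (1 / W) • Matrix.vecMulVec (∑ i, w i • x i) (∑ i, w i • x i))
        + (γ / (N : ℝ)) • ∑ j, (p j / ‖y j‖ ^ 2) •
            (‖y j‖ ^ 2 • (1 : Matrix (Fin 3) (Fin 3) ℝ) - Matrix.vecMulVec (y j) (y j)))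
    (n : EuclideanSpace ℝ (Fin 3)) (d : ℝ) :
    quadObjective K N x w y p γ n d
      = n ⬝ᵥ (B *ᵥ n) + (W / (K : ℝ)) * (d - optOffset K x w W n) ^ 2 := by
  rw [quadForm_eq K N x w y p γ W B hB n]
  unfold quadObjective optOffset
  simp only [inner_eq_dot]
  have e1 : ∑ i, w i * ((x i ⬝ᵥ n) + d) ^ 2
      = (∑ i, w i * (x i ⬝ᵥ n) ^ 2) + 2 * d * (∑ i, w i * (x i ⬝ᵥ n)) + d ^ 2 * W := by
    rw [hW, Finset.mul_sum, Finset.mul_sum, ← Finset.sum_add_distrib, ← Finset.sum_add_distrib]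
    exact Finset.sum_congr rfl fun i _ => by ring
  rw [e1]
  have e2 : ∑ j, p j * ‖cross3 (y j) n‖ ^ 2 / ‖y j‖ ^ 2
      = ∑ j, (p j / ‖y j‖ ^ 2) * (‖y j‖ ^ 2 * (n ⬝ᵥ n) - (y j ⬝ᵥ n) ^ 2) := by
    refine Finset.sum_congr rfl fun j _ => ?_
    rw [cross_norm_sq]
    ring
  rw [e2]
  field_simp
  ring_nf
  rw [Finset.sum_congr rfl fun j _ => (by ring : n ⬝ᵥ n * p j * ‖y j‖ ^ 2 * ‖y j‖⁻¹ ^ 2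
    - p j * (y j ⬝ᵥ n) ^ 2 * ‖y j‖⁻¹ ^ 2
    = p j * ‖y j‖ ^ 2 * (n ⬝ᵥ n) * ‖y j‖⁻¹ ^ 2 - p j * (y j ⬝ᵥ n) ^ 2 * ‖y j‖⁻¹ ^ 2)]
  ring

/-- **Existence and uniqueness of the optimal midsagittal plane (quadratic approximation).**
Let `B` be a real symmetric `3 × 3` matrix whose smallest eigenvalue `lam` has a
one-dimensional eigenspace spanned by a unit vector `v`, and suppose `B` is the landmark
matrix built from points `x i` with positive weights `w i` (total weight `W`), nonzero
vectors `y j` with positive weights `p j`, and `γ > 0`.  Then the quadratic plane-fitting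
objective `F`, minimized over pairs `(n, d)` with `‖n‖ = 1`, has exactly the two minimizers
`(v, d*(v))` and `(-v, -d*(v))`: the optimal plane is unique up to the sign of its normal. -/
theorem midsagittal_plane_unique_up_to_sign
    (K N : ℕ) (hK : 0 < K) (hN : 0 < N)
    (x : Fin K → EuclideanSpace ℝ (Fin 3)) (w : Fin K → ℝ) (hw : ∀ i, 0 < w i)
    (W : ℝ) (hW : W = ∑ i, w i)
    (y : Fin N → EuclideanSpace ℝ (Fin 3)) (hy : ∀ j, y j ≠ 0)
    (p : Fin N → ℝ) (hp : ∀ j, 0 < p j) (γ : ℝ) (hγ : 0 < γ)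
    (B : Matrix (Fin 3) (Fin 3) ℝ) (hBsymm : B.IsSymm)
    (hB : B = (1 / (K : ℝ)) • (∑ i, w i • Matrix.vecMulVec (x i) (x i)
          - (1 / W) • Matrix.vecMulVec (∑ i, w i • x i) (∑ i, w i • x i))
        + (γ / (N : ℝ)) • ∑ j, (p j / ‖y j‖ ^ 2) •
            (‖y j‖ ^ 2 • (1 : Matrix (Fin 3) (Fin 3) ℝ) - Matrix.vecMulVec (y j) (y j)))
    (lam : ℝ) (v : EuclideanSpace ℝ (Fin 3)) (hv : ‖v‖ = 1)
    (hev : B *ᵥ v = lam • v)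
    (hsmallest : ∀ (μ : ℝ) (u : EuclideanSpace ℝ (Fin 3)), u ≠ 0 → B *ᵥ u = μ • u → lam ≤ μ)
    (hsimple : ∀ u : EuclideanSpace ℝ (Fin 3), B *ᵥ u = lam • u → ∃ c : ℝ, u = c • v) :
    {q : EuclideanSpace ℝ (Fin 3) × ℝ |
        ‖q.1‖ = 1 ∧ ∀ (n : EuclideanSpace ℝ (Fin 3)) (d : ℝ), ‖n‖ = 1 →
          quadObjective K N x w y p γ q.1 q.2 ≤ quadObjective K N x w y p γ n d}
      = {(v, optOffset K x w W v), (-v, -(optOffset K x w W v))} := by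
  have hNE : Nonempty (Fin K) := Fin.pos_iff_nonempty.1 hK
  have hWpos : 0 < W := by
    rw [hW]
    exact Finset.sum_pos (fun i _ => hw i) Finset.univ_nonempty
  have hKpos : (0 : ℝ) < K := by exact_mod_cast hK
  have hH : B.IsHermitian := by
    rw [Matrix.IsHermitian, Matrix.conjTranspose_eq_transpose_of_trivial]
    exact hBsymm
  have hFQ : ∀ (n : EuclideanSpace ℝ (Fin 3)) (d : ℝ),
      quadObjective K N x w y p γ n d
        = n ⬝ᵥ (B *ᵥ n) + (W / (K : ℝ)) * (d - optOffset K x w W n) ^ 2 :=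
    quadObjective_eq K N x w y hy p γ W hW hWpos.ne' hKpos.ne' B hB
  have hQv : v ⬝ᵥ (B *ᵥ v) = lam := by
    rw [hev, dotProduct_smul, smul_eq_mul, ← norm_sq_eq_dot, hv]
    norm_num
  have hdneg : optOffset K x w W (-v) = -(optOffset K x w W v) := by
    unfold optOffset
    have : (∑ i, w i * ⟪x i, -v⟫) = -(∑ i, w i * ⟪x i, v⟫) := by
      rw [← Finset.sum_neg_distrib]
      exact Finset.sum_congr rfl fun i _ => by rw [inner_neg_right]; ring
    rw [this]
    ring
  have hQnv : (-v : EuclideanSpace ℝ (Fin 3)) ⬝ᵥ (B *ᵥ (-v : EuclideanSpace ℝ (Fin 3))) = lam := by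
    have h := neg_dot_mulVec B v
    calc (-v : EuclideanSpace ℝ (Fin 3)) ⬝ᵥ (B *ᵥ (-v : EuclideanSpace ℝ (Fin 3))) = v ⬝ᵥ (B *ᵥ v) := h
      _ = lam := hQv
  have hminv : quadObjective K N x w y p γ v (optOffset K x w W v) = lam := by
    rw [hFQ, hQv]; ring
  have hminnv : quadObjective K N x w y p γ (-v) (-(optOffset K x w W v)) = lam := by
    rw [hFQ, hQnv, hdneg]; ring
  have hlb : ∀ (n : EuclideanSpace ℝ (Fin 3)) (d : ℝ), ‖n‖ = 1 →
      lam ≤ quadObjective K N x w y p γ n d := by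
    intro n d hn
    rw [hFQ]
    have h1 := (rayleigh_bound hH lam hsmallest n hn).1
    have h2 : 0 ≤ (W / (K : ℝ)) * (d - optOffset K x w W n) ^ 2 :=
      mul_nonneg (div_nonneg hWpos.le hKpos.le) (sq_nonneg _)
    linarith
  ext ⟨n, d⟩
  simp only [Set.mem_setOf_eq, Set.mem_insert_iff, Set.mem_singleton_iff, Prod.mk.injEq]
  constructor
  · rintro ⟨hn1, hmin⟩
    have hle : quadObjective K N x w y p γ n d ≤ lam := by
      rw [← hminv]
      exact hmin v (optOffset K x w W v) hv
    have h1 := (rayleigh_bound hH lam hsmallest n hn1).1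
    have h2 : 0 ≤ (W / (K : ℝ)) * (d - optOffset K x w W n) ^ 2 :=
      mul_nonneg (div_nonneg hWpos.le hKpos.le) (sq_nonneg _)
    rw [hFQ] at hle
    have hQeq : n ⬝ᵥ (B *ᵥ n) = lam := by linarith
    have hdeq : d = optOffset K x w W n := by
      have h3 : (W / (K : ℝ)) * (d - optOffset K x w W n) ^ 2 = 0 := by linarith
      have h4 : (d - optOffset K x w W n) ^ 2 = 0 := by
        rcases mul_eq_zero.1 h3 with h | h
        · exact absurd h (div_ne_zero hWpos.ne' hKpos.ne')
        · exact h
      have := pow_eq_zero_iff (two_ne_zero) |>.1 h4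
      linarith
    have hBn : B *ᵥ n = lam • n := (rayleigh_bound hH lam hsmallest n hn1).2 hQeq
    obtain ⟨c, hc⟩ := hsimple n hBn
    have hcabs : |c| = 1 := by
      have : ‖n‖ = |c| * ‖v‖ := by rw [hc, norm_smul, Real.norm_eq_abs]
      rw [hn1, hv, mul_one] at this
      exact this.symm
    rcases abs_eq (by norm_num : (0:ℝ) ≤ 1) |>.1 hcabs with h | h
    · left
      subst h
      rw [one_smul] at hc
      subst hc
      exact ⟨rfl, hdeq⟩
    · right
      subst h
      rw [neg_one_smul] at hc
      subst hc
      refine ⟨rfl, ?_⟩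
      rw [hdeq, hdneg]
  · rintro (⟨h1, h2⟩ | ⟨h1, h2⟩) <;> subst h1 <;> subst h2
    · exact ⟨hv, fun n d hn => hminv ▸ hlb n d hn⟩
    · refine ⟨by rw [norm_neg, hv], fun n d hn => ?_⟩
      rw [hminnv]
      exact hlb n d hn
end

section
/- Let x₁,…,x_K ∈ ℝ³ with weights wᵢ ≥ 0 and W = Σᵢ wᵢ > 0, let y₁,…,y_N ∈ ℝ³ be nonzero with weights pⱼ ≥ 0, and let γ ≥ 0. Define the full nonlinear objective f(n,d) = (1/K) Σᵢ wᵢ (⟪xᵢ,n⟫ + d)² + (γ/N) Σⱼ pⱼ (arcsin(‖yⱼ × n‖ / ‖yⱼ‖))² for unit vectors n ∈ ℝ³ and d ∈ ℝ (note ‖yⱼ × n‖ ≤ ‖yⱼ‖ when ‖n‖ = 1, so the arcsine is well-defined). Then f attains its infimum: there exist n* with ‖n*‖ = 1 and d* ∈ ℝ such that f(n*, d*) ≤ f(n, d) for all unit n and all d ∈ ℝ. -/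
open RealInnerProductSpace Matrix

/-- The full nonlinear midsagittal-plane objective
`f(n,d) = (1/K) ∑ i, w i (⟪x i, n⟫ + d)² + (γ/N) ∑ j, p j (arcsin(‖y j × n‖/‖y j‖))²`. -/
noncomputable def fullObjective (K N : ℕ) (x : Fin K → EuclideanSpace ℝ (Fin 3))
    (w : Fin K → ℝ) (y : Fin N → EuclideanSpace ℝ (Fin 3)) (p : Fin N → ℝ) (γ : ℝ)
    (n : EuclideanSpace ℝ (Fin 3)) (d : ℝ) : ℝ :=
  (1 / (K : ℝ)) * ∑ i, w i * (⟪x i, n⟫ + d) ^ 2 +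
    (γ / (N : ℝ)) * ∑ j, p j * Real.arcsin (‖cross3 (y j) n‖ / ‖y j‖) ^ 2

/-- **Existence of a minimizer for the full nonlinear objective.**  For landmarks `x i`
with nonnegative weights of positive total weight, nonzero vectors `y j` with nonnegative
weights, and `γ ≥ 0`, the objective `f` attains its infimum over pairs `(n, d)` with
`‖n‖ = 1` and `d ∈ ℝ`. -/
theorem full_objective_attains_min
    (K N : ℕ) (x : Fin K → EuclideanSpace ℝ (Fin 3)) (w : Fin K → ℝ)
    (hw : ∀ i, 0 ≤ w i) (W : ℝ) (hW : W = ∑ i, w i) (hWpos : 0 < W)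
    (y : Fin N → EuclideanSpace ℝ (Fin 3)) (hy : ∀ j, y j ≠ 0)
    (p : Fin N → ℝ) (hp : ∀ j, 0 ≤ p j) (γ : ℝ) (hγ : 0 ≤ γ) :
    ∃ (nstar : EuclideanSpace ℝ (Fin 3)) (dstar : ℝ), ‖nstar‖ = 1 ∧
      ∀ (n : EuclideanSpace ℝ (Fin 3)) (d : ℝ), ‖n‖ = 1 →
        fullObjective K N x w y p γ nstar dstar ≤ fullObjective K N x w y p γ n d := by
  classical
  -- a strictly positive weight
  obtain ⟨i₀, hi₀⟩ : ∃ i, 0 < w i := by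
    by_contra h
    push_neg at h
    have hs : ∑ i, w i ≤ 0 := Finset.sum_nonpos fun i _ => h i
    rw [hW] at hWpos; linarith
  have hKpos : (0 : ℝ) < K := by exact_mod_cast i₀.pos
  set F : EuclideanSpace ℝ (Fin 3) × ℝ → ℝ :=
    fun q => fullObjective K N x w y p γ q.1 q.2 with hF
  -- continuity
  have hcross : ∀ j : Fin N, Continuous fun n : EuclideanSpace ℝ (Fin 3) => cross3 (y j) n := by
    intro j
    have hlin : IsLinearMap ℝ (fun n : EuclideanSpace ℝ (Fin 3) => cross3 (y j) n) :=
      ⟨fun a b => by simp [cross3],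
       fun c a => by simp [cross3]⟩
    exact LinearMap.continuous_of_finiteDimensional (IsLinearMap.mk' _ hlin)
  have hcont : Continuous F := by
    apply Continuous.add
    · exact continuous_const.mul (continuous_finset_sum _ fun i _ =>
        continuous_const.mul (((Continuous.inner continuous_const continuous_fst).add
          continuous_snd).pow 2))
    · exact continuous_const.mul (continuous_finset_sum _ fun j _ =>
        continuous_const.mul ((Real.continuous_arcsin.comp
          ((((hcross j).comp continuous_fst).norm).div_const ‖y j‖)).pow 2))
  -- nonnegativity
  have hFnonneg : ∀ q, 0 ≤ F q := by
    intro q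
    refine add_nonneg (mul_nonneg (by positivity)
      (Finset.sum_nonneg fun i _ => mul_nonneg (hw i) (sq_nonneg _)))
      (mul_nonneg (by positivity)
      (Finset.sum_nonneg fun j _ => mul_nonneg (hp j) (sq_nonneg _)))
  -- coercivity lower bound
  have hlow : ∀ (n : EuclideanSpace ℝ (Fin 3)) (d : ℝ), ‖n‖ = 1 → ‖x i₀‖ ≤ |d| →
      (w i₀ / K) * (|d| - ‖x i₀‖) ^ 2 ≤ F (n, d) := by
    intro n d hn hBd
    have hinner : |⟪x i₀, n⟫| ≤ ‖x i₀‖ := by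
      have := abs_real_inner_le_norm (x i₀) n
      rwa [hn, mul_one] at this
    have h2 : |d| - ‖x i₀‖ ≤ |⟪x i₀, n⟫ + d| := by
      have h3 : |d| - |⟪x i₀, n⟫| ≤ |d - -⟪x i₀, n⟫| := by
        calc |d| - |⟪x i₀, n⟫| = |d| - |-⟪x i₀, n⟫| := by rw [abs_neg]
        _ ≤ |d - -⟪x i₀, n⟫| := abs_sub_abs_le_abs_sub _ _
      have h4 : d - -⟪x i₀, n⟫ = ⟪x i₀, n⟫ + d := by ring
      rw [h4] at h3
      linarith
    have hsq : (|d| - ‖x i₀‖) ^ 2 ≤ (⟪x i₀, n⟫ + d) ^ 2 := by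
      have := pow_le_pow_left₀ (by linarith) h2 2
      rwa [sq_abs] at this
    have hsum : w i₀ * (⟪x i₀, n⟫ + d) ^ 2 ≤ ∑ i, w i * (⟪x i, n⟫ + d) ^ 2 :=
      Finset.single_le_sum (f := fun i => w i * (⟪x i, n⟫ + d) ^ 2)
        (fun i _ => mul_nonneg (hw i) (sq_nonneg _)) (Finset.mem_univ i₀)
    have hT2 : 0 ≤ (γ / (N : ℝ)) * ∑ j, p j * Real.arcsin (‖cross3 (y j) n‖ / ‖y j‖) ^ 2 :=
      mul_nonneg (by positivity) (Finset.sum_nonneg fun j _ => mul_nonneg (hp j) (sq_nonneg _))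
    have hstep : (w i₀ / K) * (|d| - ‖x i₀‖) ^ 2 ≤
        (1 / (K : ℝ)) * ∑ i, w i * (⟪x i, n⟫ + d) ^ 2 := by
      rw [div_mul_eq_mul_div, one_div, inv_mul_eq_div, div_le_div_iff_of_pos_right hKpos]
      calc w i₀ * (|d| - ‖x i₀‖) ^ 2 ≤ w i₀ * (⟪x i₀, n⟫ + d) ^ 2 :=
            mul_le_mul_of_nonneg_left hsq hi₀.le
        _ ≤ _ := hsum
    show (w i₀ / K) * (|d| - ‖x i₀‖) ^ 2 ≤ _ + _
    linarith
  -- reference point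
  set n₀ : EuclideanSpace ℝ (Fin 3) := EuclideanSpace.single 0 (1 : ℝ) with hn₀def
  have hn₀ : ‖n₀‖ = 1 := by
    rw [hn₀def, EuclideanSpace.norm_single]; exact abs_one
  set C0 : ℝ := F (n₀, 0) with hC0
  have hC0nn : 0 ≤ C0 := hFnonneg _
  set B : ℝ := ‖x i₀‖ with hB
  set M : ℝ := B + Real.sqrt (K * C0 / w i₀) + 1 with hM
  have hM0 : 0 ≤ M := by
    have := Real.sqrt_nonneg (K * C0 / w i₀)
    have : (0:ℝ) ≤ B := norm_nonneg _
    positivity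
  -- compact set and min
  set S : Set (EuclideanSpace ℝ (Fin 3) × ℝ) :=
    Metric.sphere (0 : EuclideanSpace ℝ (Fin 3)) 1 ×ˢ Set.Icc (-M) M with hS
  have hScompact : IsCompact S := (isCompact_sphere _ _).prod isCompact_Icc
  have hn₀mem : (n₀, (0:ℝ)) ∈ S := by
    constructor
    · simpa [mem_sphere_zero_iff_norm] using hn₀
    · exact ⟨neg_nonpos.2 hM0, hM0⟩
  have hSne : S.Nonempty := ⟨_, hn₀mem⟩
  obtain ⟨⟨ns, ds⟩, hmem, hmin⟩ := hScompact.exists_isMinOn hSne hcont.continuousOn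
  rw [isMinOn_iff] at hmin
  have hns : ‖ns‖ = 1 := by
    have := hmem.1
    simpa [mem_sphere_zero_iff_norm] using this
  refine ⟨ns, ds, hns, ?_⟩
  intro n d hn
  by_cases hd : |d| ≤ M
  · exact hmin (n, d) ⟨by simpa [mem_sphere_zero_iff_norm] using hn, abs_le.1 hd⟩
  · push_neg at hd
    have hmin₀ : F (ns, ds) ≤ C0 := hmin _ hn₀mem
    have hsqrtnn : 0 ≤ Real.sqrt (K * C0 / w i₀) := Real.sqrt_nonneg _
    have hBd : B ≤ |d| := by rw [hM] at hd; linarith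
    have hlb := hlow n d hn hBd
    have harg : 0 ≤ K * C0 / w i₀ := by positivity
    have hs : Real.sqrt (K * C0 / w i₀) < |d| - B := by rw [hM] at hd; linarith
    have h2 : K * C0 / w i₀ < (|d| - B) ^ 2 := by
      nlinarith [Real.sq_sqrt harg, Real.sqrt_nonneg (K * C0 / w i₀)]
    have hwK : 0 < w i₀ / (K : ℝ) := div_pos hi₀ hKpos
    have hmul : (w i₀ / K) * (K * C0 / w i₀) < (w i₀ / K) * (|d| - B) ^ 2 :=
      mul_lt_mul_of_pos_left h2 hwK
    have heq : (w i₀ / (K : ℝ)) * (K * C0 / w i₀) = C0 := by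
      field_simp
    rw [heq] at hmul
    have : F (ns, ds) ≤ F (n, d) := by linarith
    exact this
end
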